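/- Let A be a real symmetric positive definite (M−1)×(M−1) matrix and k > 0. Define the discretized normalized gradient flow: Ũ^{n+1} = (I + kA)^{-1} Uⁿ and U^{n+1} = Ũ^{n+1}/‖Ũ^{n+1}‖, starting from U⁰ with ‖U⁰‖ = 1. Then the discrete energy E(U) = UᵀAU is non-increasing: E(U^{n+1}) ≤ E(Uⁿ) for all n ≥ 0. -/

import Mathlib

open Matrix

noncomputable section

lemma dps_nonneg {n : ℕ} (x : Fin n → ℝ) : 0 ≤ x ⬝ᵥ x :=
  Finset.sum_nonneg fun _ _ => mul_self_nonneg _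

lemma dps_pos {n : ℕ} {x : Fin n → ℝ} (hx : x ≠ 0) : 0 < x ⬝ᵥ x := by
  rcases lt_or_eq_of_le (dps_nonneg x) with h | h
  · exact h
  · exact absurd (dotProduct_self_eq_zero.1 h.symm) hx

lemma cs {n : ℕ} (x y : Fin n → ℝ) : (x ⬝ᵥ y)^2 ≤ (x ⬝ᵥ x) * (y ⬝ᵥ y) := by
  have h := Finset.sum_mul_sq_le_sq_mul_sq Finset.univ x y
  simpa [dotProduct, sq] using h

lemma sym_dot {n : ℕ} {A : Matrix (Fin n) (Fin n) ℝ} (hA : A.IsHermitian)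
    (x y : Fin n → ℝ) : x ⬝ᵥ (A *ᵥ y) = (A *ᵥ x) ⬝ᵥ y := by
  rw [Matrix.dotProduct_mulVec, ← Matrix.mulVec_transpose]
  congr 1
  have : Aᵀ = A := by
    have := hA.eq
    simpa [Matrix.conjTranspose_eq_transpose_of_trivial] using this
  rw [this]

lemma csA {n : ℕ} {A : Matrix (Fin n) (Fin n) ℝ} (hA : A.PosDef)
    (x y : Fin n → ℝ) : (x ⬝ᵥ (A *ᵥ y))^2 ≤ (x ⬝ᵥ (A *ᵥ x)) * (y ⬝ᵥ (A *ᵥ y)) := by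
  have key : ∀ t : ℝ, 0 ≤ (y ⬝ᵥ (A *ᵥ y)) * (t * t) + (2 * (x ⬝ᵥ (A *ᵥ y))) * t + x ⬝ᵥ (A *ᵥ x) := by
    intro t
    have h0 := hA.posSemidef.dotProduct_mulVec_nonneg (x + t • y)
    simp only [star_trivial, Matrix.mulVec_add, Matrix.mulVec_smul, dotProduct_add,
      add_dotProduct, smul_dotProduct, dotProduct_smul, smul_eq_mul] at h0
    have hxy : y ⬝ᵥ (A *ᵥ x) = x ⬝ᵥ (A *ᵥ y) := by
      rw [sym_dot hA.isHermitian, dotProduct_comm]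
    rw [hxy] at h0
    nlinarith [h0]
  have := discrim_le_zero key
  simp only [discrim] at this
  nlinarith [this]

theorem stmt9 {n : ℕ} (A : Matrix (Fin n) (Fin n) ℝ) (hA : A.PosDef)
    (k : ℝ) (hk : 0 < k) (U : ℕ → Fin n → ℝ) (hU0 : U 0 ⬝ᵥ U 0 = 1)
    (hstep : ∀ m : ℕ,
      U (m + 1) =
        (Real.sqrt ((((1 : Matrix (Fin n) (Fin n) ℝ) + k • A)⁻¹ *ᵥ U m) ⬝ᵥ
            (((1 : Matrix (Fin n) (Fin n) ℝ) + k • A)⁻¹ *ᵥ U m)))⁻¹ •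
          (((1 : Matrix (Fin n) (Fin n) ℝ) + k • A)⁻¹ *ᵥ U m)) :
    ∀ m : ℕ, U (m + 1) ⬝ᵥ (A *ᵥ U (m + 1)) ≤ U m ⬝ᵥ (A *ᵥ U m) := by
  set C : Matrix (Fin n) (Fin n) ℝ := (1 : Matrix (Fin n) (Fin n) ℝ) + k • A with hCdef
  have hkA : (k • A).PosDef := by
    refine Matrix.PosDef.of_dotProduct_mulVec_pos ?_ (fun x hx => ?_)
    · show (k • A)ᴴ = k • A
      rw [Matrix.conjTranspose_smul, hA.1.eq]
      simp
    · rw [Matrix.smul_mulVec, dotProduct_smul, smul_eq_mul]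
      exact mul_pos hk (hA.dotProduct_mulVec_pos hx)
  have hCpd : C.PosDef := Matrix.PosDef.one.add hkA
  have hdet : IsUnit C.det := isUnit_iff_ne_zero.2 (ne_of_gt hCpd.det_pos)
  have hrec : ∀ m : ℕ, C *ᵥ (C⁻¹ *ᵥ U m) = U m := by
    intro m
    rw [Matrix.mulVec_mulVec, Matrix.mul_nonsing_inv C hdet, Matrix.one_mulVec]
  have hwne : ∀ m : ℕ, U m ⬝ᵥ U m = 1 → C⁻¹ *ᵥ U m ≠ 0 := by
    intro m hm h0
    have := hrec m
    rw [h0, Matrix.mulVec_zero] at this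
    rw [← this] at hm
    simp at hm
  have hnorm : ∀ m : ℕ, U m ⬝ᵥ U m = 1 := by
    intro m
    induction m with
    | zero => exact hU0
    | succ m ih =>
      have hs : 0 < (C⁻¹ *ᵥ U m) ⬝ᵥ (C⁻¹ *ᵥ U m) := dps_pos (hwne m ih)
      rw [hstep m]
      rw [smul_dotProduct, dotProduct_smul, smul_eq_mul, smul_eq_mul, ← mul_assoc, ← mul_inv,
        Real.mul_self_sqrt hs.le]
      exact inv_mul_cancel₀ (ne_of_gt hs)
  intro m
  have hw : C⁻¹ *ᵥ U m ≠ 0 := hwne m (hnorm m)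
  set w : Fin n → ℝ := C⁻¹ *ᵥ U m with hwdef
  set v : Fin n → ℝ := A *ᵥ w with hvdef
  set a : ℝ := w ⬝ᵥ v with hadef
  set s : ℝ := w ⬝ᵥ w with hsdef
  set b : ℝ := v ⬝ᵥ v with hbdef
  set c : ℝ := v ⬝ᵥ (A *ᵥ v) with hcdef
  have hs : 0 < s := dps_pos hw
  have ha : 0 < a := by
    have := hA.dotProduct_mulVec_pos hw
    simpa [hadef, hvdef] using this
  have hb : 0 ≤ b := dps_nonneg v
  have hc : 0 ≤ c := by
    have := hA.posSemidef.dotProduct_mulVec_nonneg v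
    simpa [hcdef] using this
  have hueq : U m = w + k • v := by
    conv_lhs => rw [← hrec m]
    rw [← hwdef, hCdef, Matrix.add_mulVec, Matrix.one_mulVec, Matrix.smul_mulVec, ← hvdef]
  have hwAv : w ⬝ᵥ (A *ᵥ v) = b := by
    rw [sym_dot hA.isHermitian, ← hvdef, hbdef]
  have h1 : s + 2*k*a + k^2*b = 1 := by
    have hh := hnorm m
    rw [hueq, dotProduct_add, add_dotProduct, add_dotProduct, smul_dotProduct, dotProduct_smul,
      smul_dotProduct, dotProduct_smul] at hh
    simp only [smul_eq_mul] at hh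
    have hvw : v ⬝ᵥ w = a := by rw [dotProduct_comm, hadef]
    rw [hvw, ← hadef, ← hsdef, ← hbdef] at hh
    nlinarith [hh]
  have h2 : U m ⬝ᵥ (A *ᵥ U m) = a + 2*k*b + k^2*c := by
    rw [hueq, Matrix.mulVec_add, Matrix.mulVec_smul]
    simp only [dotProduct_add, add_dotProduct, dotProduct_smul, smul_dotProduct,
      smul_eq_mul, ← hvdef]
    have hvAw : v ⬝ᵥ (A *ᵥ w) = b := by rw [← hvdef, ← hbdef]
    rw [hvAw, hwAv, ← hadef, ← hcdef]
    ring
  have h3 : U (m+1) ⬝ᵥ (A *ᵥ U (m+1)) = s⁻¹ * a := by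
    rw [hstep m]
    rw [Matrix.mulVec_smul, dotProduct_smul, smul_dotProduct]
    simp only [smul_eq_mul, ← hwdef, ← hvdef, ← hadef, ← hsdef]
    rw [← mul_assoc, ← mul_inv, Real.mul_self_sqrt hs.le]
  have hcs1 : a^2 ≤ s * b := by
    have := cs w v
    rw [← hadef, ← hsdef, ← hbdef] at this
    exact this
  have hcs2 : b^2 ≤ a * c := by
    have := csA hA w v
    rw [hwAv, ← hadef, ← hcdef] at this
    exact this
  have hab : a * b ≤ s * c := by
    nlinarith [hcs1, hcs2, ha, hs, hb, hc, mul_le_mul_of_nonneg_right hcs1 hb,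
      mul_le_mul_of_nonneg_left hcs2 hs.le]
  rw [h3, h2]
  rw [inv_mul_le_iff₀ hs]
  nlinarith [h1, hab, hcs1, mul_pos hk hk, hk,
    mul_nonneg (mul_nonneg hk.le hk.le) (sub_nonneg.2 hab),
    mul_nonneg hk.le (sub_nonneg.2 hcs1)]
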